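/- With T = L + M, R = K + M as above, R is a GCD-domain if and only if T is a GCD-domain, L is the fraction field of K, K is a GCD-domain, and T_M is a valuation domain. -/

import Mathlib

set_option linter.unusedSectionVars false
set_option linter.unusedVariables false


section Setup

variable {T : Type*} [CommRing T] [IsDomain T]

/-- The subring `K + M` of `T`, for a subring `K` and an ideal `M` of `T`. -/
def ringR (K : Subring T) (M : Ideal T) : Subring T where
  carrier := {t | ∃ k ∈ K, ∃ m ∈ M, t = k + m}
  one_mem' := ⟨1, K.one_mem, 0, M.zero_mem, by ring⟩
  zero_mem' := ⟨0, K.zero_mem, 0, M.zero_mem, by ring⟩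
  add_mem' := by
    rintro a b ⟨k1, hk1, m1, hm1, rfl⟩ ⟨k2, hk2, m2, hm2, rfl⟩
    exact ⟨k1 + k2, K.add_mem hk1 hk2, m1 + m2, M.add_mem hm1 hm2, by ring⟩
  neg_mem' := by
    rintro a ⟨k, hk, m, hm, rfl⟩
    exact ⟨-k, K.neg_mem hk, -m, M.neg_mem hm, by ring⟩
  mul_mem' := by
    rintro a b ⟨k1, hk1, m1, hm1, rfl⟩ ⟨k2, hk2, m2, hm2, rfl⟩
    refine ⟨k1 * k2, K.mul_mem hk1 hk2, k1 * m2 + m1 * k2 + m1 * m2, ?_, by ring⟩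
    exact M.add_mem (M.add_mem (M.mul_mem_left _ hm2) (M.mul_mem_right _ hm1))
      (M.mul_mem_left _ hm2)

theorem K_le_ringR (K : Subring T) (M : Ideal T) : K ≤ ringR K M :=
  fun k hk => ⟨k, hk, 0, M.zero_mem, (add_zero k).symm⟩

/-- An ideal `A` of `T`, viewed as a module over a subring `S` of `T`. -/
def idealAsMod (S : Subring T) (A : Ideal T) : Submodule ↥S T where
  carrier := A
  add_mem' := fun ha hb => A.add_mem ha hb
  zero_mem' := A.zero_mem
  smul_mem' := fun r a ha => A.mul_mem_left (r : T) ha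

/-- The subring `L` of `T` is a field. -/
def IsFieldSub (L : Subring T) : Prop := ∀ x ∈ L, x ≠ 0 → ∃ y ∈ L, x * y = 1

/-- `T = L ⊕ M` as additive groups: `L` is a retract of `T` with maximal ideal `M`. -/
def DirectSumDecomp (L : Subring T) (M : Ideal T) : Prop :=
  (∀ t : T, ∃ l ∈ L, ∃ m ∈ M, t = l + m) ∧ ∀ x ∈ L, x ∈ M → x = 0

/-- `L` is the field of fractions of `K` (inside `T`). -/
def IsFracOf (K L : Subring T) : Prop :=
  ∀ l ∈ L, ∃ a ∈ K, ∃ b ∈ K, b ≠ 0 ∧ l * b = a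

/-- The module structure on a subring over a smaller subring. -/
noncomputable def modOfLE {K L : Subring T} (h : K ≤ L) : Module ↥K ↥L :=
  ((Subring.inclusion h).toAlgebra).toModule

/-- `T` localized at the prime `M` is a valuation domain. -/
def ValAtPrime (M : Ideal T) (hp : M.IsPrime) : Prop :=
  @ValuationRing (@Localization.AtPrime T _ M hp) _
    (@IsLocalization.isDomain_of_local_atPrime T _ _ M hp)

/-- A Prüfer domain: every nonzero finitely generated ideal is invertible. -/
def IsPruferDomain (A : Type*) [CommRing A] [IsDomain A] : Prop :=
  ∀ I : Ideal A, I ≠ ⊥ → I.FG →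
    IsUnit (I : FractionalIdeal (nonZeroDivisors A) (FractionRing A))

/-- A GCD domain: any two nonzero elements admit a greatest common divisor. -/
def IsGCDDomain (A : Type*) [CommRing A] [IsDomain A] : Prop :=
  ∀ a b : A, a ≠ 0 → b ≠ 0 →
    ∃ g : A, g ∣ a ∧ g ∣ b ∧ ∀ c : A, c ∣ a → c ∣ b → c ∣ g

/-- The algebra structure of the fraction field of `T` over a subring of `T`. -/
noncomputable def algFrac (S : Subring T) : Algebra ↥S (FractionRing T) :=
  ((algebraMap T (FractionRing T)).comp S.subtype).toAlgebra

end Setup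


section Aux
variable {T : Type*} [CommRing T] [IsDomain T]

lemma subring_dvd_iff {S : Subring T} (a b : ↥S) :
    a ∣ b ↔ ∃ w ∈ S, (b : T) = (a : T) * w := by
  constructor
  · rintro ⟨w, rfl⟩; exact ⟨w, w.2, rfl⟩
  · rintro ⟨w, hw, h⟩; exact ⟨⟨w, hw⟩, Subtype.ext h⟩

lemma gcd_scale {A : Type*} [CommRing A] [IsDomain A] (hA : IsGCDDomain A)
    {a b k g : A} (ha : a ≠ 0) (hb : b ≠ 0) (hk : k ≠ 0)
    (hg : ∀ c, c ∣ a → c ∣ b → c ∣ g) :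
    ∀ c, c ∣ k * a → c ∣ k * b → c ∣ k * g := by
  intro c hca hcb
  obtain ⟨G, hGa, hGb, hG⟩ := hA (k * a) (k * b) (mul_ne_zero hk ha) (mul_ne_zero hk hb)
  obtain ⟨G₁, rfl⟩ := hG k (Dvd.intro a rfl) (Dvd.intro b rfl)
  have h1 : G₁ ∣ a := (mul_dvd_mul_iff_left hk).mp hGa
  have h2 : G₁ ∣ b := (mul_dvd_mul_iff_left hk).mp hGb
  exact (hG c hca hcb).trans (mul_dvd_mul_left k (hg G₁ h1 h2))

lemma euclid {A : Type*} [CommRing A] [IsDomain A] (hA : IsGCDDomain A)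
    {s t u : A} (hs : s ≠ 0) (ht : t ≠ 0) (hu : u ≠ 0)
    (hcop : ∀ c, c ∣ s → c ∣ t → IsUnit c) (h : t ∣ s * u) : t ∣ u := by
  obtain ⟨G, hG1, hG2, hG⟩ := hA (t * u) (s * u) (mul_ne_zero ht hu) (mul_ne_zero hs hu)
  obtain ⟨e, rfl⟩ := hG u (Dvd.intro_left t rfl) (Dvd.intro_left s rfl)
  rw [mul_comm t u] at hG1
  have he1 : e ∣ t := (mul_dvd_mul_iff_left hu).mp hG1
  rw [mul_comm s u] at hG2
  have he2 : e ∣ s := (mul_dvd_mul_iff_left hu).mp hG2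
  have hte : t ∣ u * e := hG t (dvd_mul_right t u) h
  exact ((hcop e he2 he1).dvd_mul_right).mp hte

end Aux

section Proj
variable {T : Type*} [CommRing T] [IsDomain T] {L : Subring T} {M : Ideal T}

noncomputable def piF (hLM : DirectSumDecomp L M) : T → T :=
  fun t => (hLM.1 t).choose

lemma piF_memL (hLM : DirectSumDecomp L M) (t : T) : piF hLM t ∈ L :=
  (hLM.1 t).choose_spec.1

lemma piF_decomp (hLM : DirectSumDecomp L M) (t : T) :
    ∃ m ∈ M, t = piF hLM t + m := (hLM.1 t).choose_spec.2

lemma piF_unique (hLM : DirectSumDecomp L M) {t l m : T}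
    (hl : l ∈ L) (hm : m ∈ M) (h : t = l + m) : piF hLM t = l := by
  obtain ⟨m', hm', h'⟩ := piF_decomp hLM t
  have hmem : piF hLM t - l ∈ L := L.sub_mem (piF_memL hLM t) hl
  have hmemM : piF hLM t - l ∈ M := by
    have h2 : piF hLM t + m' = l + m := h'.symm.trans h
    have : piF hLM t - l = m - m' := by linear_combination h2
    rw [this]; exact M.sub_mem hm hm'
  have h3 := hLM.2 _ hmem hmemM
  linear_combination h3

lemma piF_of_memL (hLM : DirectSumDecomp L M) {t : T} (ht : t ∈ L) :
    piF hLM t = t := piF_unique hLM ht M.zero_mem (by ring)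

lemma piF_of_memM (hLM : DirectSumDecomp L M) {t : T} (ht : t ∈ M) :
    piF hLM t = 0 := piF_unique hLM L.zero_mem ht (by ring)

lemma piF_memM_iff (hLM : DirectSumDecomp L M) {t : T} :
    t ∈ M ↔ piF hLM t = 0 := by
  refine ⟨piF_of_memM hLM, fun h => ?_⟩
  obtain ⟨m, hm, h'⟩ := piF_decomp hLM t
  rw [h', h, zero_add]; exact hm

lemma piF_mul (hLM : DirectSumDecomp L M) (a b : T) :
    piF hLM (a * b) = piF hLM a * piF hLM b := by
  obtain ⟨m, hm, h⟩ := piF_decomp hLM a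
  obtain ⟨m', hm', h'⟩ := piF_decomp hLM b
  refine piF_unique hLM (L.mul_mem (piF_memL hLM a) (piF_memL hLM b))
    (M.add_mem (M.add_mem (M.mul_mem_left (piF hLM a) hm') (M.mul_mem_right (piF hLM b) hm)) (M.mul_mem_left m hm'))
    (calc a * b = (piF hLM a + m) * (piF hLM b + m') := by rw [← h, ← h']
      _ = _ := by ring)

lemma piF_one (hLM : DirectSumDecomp L M) : piF hLM 1 = 1 :=
  piF_of_memL hLM L.one_mem

lemma mem_ringR_iff {K : Subring T} (hKL : K ≤ L) (hLM : DirectSumDecomp L M) {t : T} :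
    t ∈ ringR K M ↔ piF hLM t ∈ K := by
  constructor
  · rintro ⟨k, hk, m, hm, rfl⟩
    rw [piF_unique hLM (hKL hk) hm rfl]; exact hk
  · intro h
    obtain ⟨m, hm, h'⟩ := piF_decomp hLM t
    exact ⟨piF hLM t, h, m, hm, h'⟩

end Proj

section Main
variable {T : Type*} [CommRing T] [IsDomain T] {L K : Subring T} {M : Ideal T}

/-- divisibility within a subring, phrased in `T` -/
def DvdIn (S : Subring T) (x y : T) : Prop := ∃ w ∈ S, y = x * w

lemma memM_ringR {m : T} (hm : m ∈ M) : m ∈ ringR K M :=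
  ⟨0, K.zero_mem, m, hm, (zero_add m).symm⟩

lemma hR_gcd (hR : IsGCDDomain ↥(ringR K M)) {x y : T}
    (hx : x ∈ ringR K M) (hy : y ∈ ringR K M) (hx0 : x ≠ 0) (hy0 : y ≠ 0) :
    ∃ g ∈ ringR K M, DvdIn (ringR K M) g x ∧ DvdIn (ringR K M) g y ∧
      ∀ c ∈ ringR K M, DvdIn (ringR K M) c x → DvdIn (ringR K M) c y →
        DvdIn (ringR K M) c g := by
  obtain ⟨g, hg1, hg2, hg3⟩ := hR ⟨x, hx⟩ ⟨y, hy⟩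
    (fun h => hx0 (congrArg Subtype.val h)) (fun h => hy0 (congrArg Subtype.val h))
  refine ⟨(g : T), g.2, (subring_dvd_iff _ _).mp hg1, (subring_dvd_iff _ _).mp hg2, ?_⟩
  intro c hc h1 h2
  exact (subring_dvd_iff _ _).mp
    (hg3 ⟨c, hc⟩ ((subring_dvd_iff _ _).mpr h1) ((subring_dvd_iff _ _).mpr h2))

lemma exists_not_in_K (hKL : K ≤ L) (hKne : K ≠ L) : ∃ l, l ∈ L ∧ l ∉ K := by
  by_contra h
  push_neg at h
  exact hKne (le_antisymm hKL (fun x hx => h x hx))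

lemma not_field (hL : IsFieldSub L) (hM0 : M ≠ ⊥) (hLM : DirectSumDecomp L M)
    (hKL : K ≤ L) (hKne : K ≠ L) (hR : IsGCDDomain ↥(ringR K M)) :
    ∃ k₀ ∈ K, k₀ ≠ 0 ∧ ∀ w ∈ K, k₀ * w ≠ 1 := by
  by_contra hcon
  push_neg at hcon
  -- hcon : ∀ k ∈ K, k ≠ 0 → ∃ w ∈ K, k * w = 1
  have hfield : ∀ k, k ∈ K → k ≠ 0 → ∃ w ∈ K, k * w = 1 := by
    intro k hk hk0
    obtain ⟨w, hw, h⟩ := hcon k hk hk0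
    exact ⟨w, hw, h⟩
  obtain ⟨l, hlL, hlK⟩ := exists_not_in_K hKL hKne
  obtain ⟨m₀, hm₀M, hm₀⟩ := Submodule.exists_mem_ne_zero_of_ne_bot hM0
  have hl0 : l ≠ 0 := fun h => hlK (h ▸ K.zero_mem)
  set x := m₀ * m₀ with hxdef
  set y := l * (m₀ * m₀) with hydef
  have hxM : x ∈ M := M.mul_mem_left m₀ hm₀M
  have hyM : y ∈ M := M.mul_mem_left l (M.mul_mem_left m₀ hm₀M)
  have hx0 : x ≠ 0 := mul_ne_zero hm₀ hm₀
  have hy0 : y ≠ 0 := mul_ne_zero hl0 hx0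
  obtain ⟨g, hgR, hgx, hgy, hgbig⟩ := hR_gcd hR (memM_ringR hxM) (memM_ringR hyM) hx0 hy0
  have hg0 : g ≠ 0 := by
    rintro rfl
    obtain ⟨w, -, hw⟩ := hgx
    rw [zero_mul] at hw
    exact hx0 hw
  have step1 : ∀ ε, ε ∈ L → ε ≠ 0 → DvdIn (ringR K M) (ε * m₀) g := by
    intro ε hε hε0
    obtain ⟨ε', hε'L, hεε'⟩ := hL ε hε hε0
    refine hgbig (ε * m₀) (memM_ringR (M.mul_mem_left ε hm₀M)) ?_ ?_
    · refine ⟨ε' * m₀, memM_ringR (M.mul_mem_left ε' hm₀M), ?_⟩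
      calc x = (ε * ε') * (m₀ * m₀) := by rw [hεε', one_mul]
        _ = ε * m₀ * (ε' * m₀) := by ring
    · refine ⟨ε' * (l * m₀), memM_ringR (M.mul_mem_left _ (M.mul_mem_left l hm₀M)), ?_⟩
      calc y = (ε * ε') * (l * (m₀ * m₀)) := by rw [hεε', one_mul]
        _ = ε * m₀ * (ε' * (l * m₀)) := by ring
  obtain ⟨g₁, hg₁R, hgg₁⟩ := step1 1 L.one_mem one_ne_zero
  rw [one_mul] at hgg₁
  -- hgg₁ : g = m₀ * g₁
  have hg₁0 : g₁ ≠ 0 := by rintro rfl; rw [mul_zero] at hgg₁; exact hg0 hgg₁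
  have hKabsorb : ∀ lam, lam ∈ L → lam ≠ 0 → (∃ w ∈ ringR K M, g₁ = lam * w) → False → True :=
    fun _ _ _ _ _ => trivial
  -- Step 2 : piF g₁ = 0
  have hπg₁K : piF hLM g₁ ∈ K := (mem_ringR_iff hKL hLM).mp hg₁R
  have step2 : piF hLM g₁ = 0 := by
    by_contra hne
    have habs : ∀ lam, lam ∈ L → lam ≠ 0 → lam ∈ K := by
      intro lam hlam hlam0
      obtain ⟨lam', hlam'L, hh⟩ := hL lam hlam hlam0
      have hlam'0 : lam' ≠ 0 := by
        rintro rfl; rw [mul_zero] at hh; exact one_ne_zero hh.symm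
      set ε := piF hLM g₁ * lam' with hεdef
      have hεL : ε ∈ L := L.mul_mem (piF_memL hLM g₁) hlam'L
      have hε0 : ε ≠ 0 := mul_ne_zero hne hlam'0
      obtain ⟨w, hwR, hw⟩ := step1 ε hεL hε0
      -- g = ε * m₀ * w, g = m₀ * g₁
      have : m₀ * g₁ = m₀ * (ε * w) := by rw [← hgg₁, hw]; ring
      have hg₁εw : g₁ = ε * w := mul_left_cancel₀ hm₀ this
      have hπw : piF hLM w ∈ K := (mem_ringR_iff hKL hLM).mp hwR
      have : piF hLM g₁ = ε * piF hLM w := by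
        rw [hg₁εw, piF_mul, piF_of_memL hLM hεL]
      rw [hεdef] at this
      -- piF g₁ = piF g₁ * lam' * piF w  ⇒  1 = lam' * piF w ⇒ lam = piF w
      have h2 : (1 : T) = lam' * piF hLM w :=
        mul_left_cancel₀ hne (by linear_combination this)
      have h3 : lam = piF hLM w := by
        have e1 : lam * 1 = lam * (lam' * piF hLM w) := by rw [← h2]
        have e2 : lam * (lam' * piF hLM w) = (lam * lam') * piF hLM w := by ring
        rw [e2, hh, one_mul, mul_one] at e1
        exact e1
      rw [h3]; exact hπw
    exact hlK (habs l hlL hl0)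
  have hg₁M : g₁ ∈ M := (piF_memM_iff hLM).mpr step2
  -- Step 3
  obtain ⟨h, hhR, hxh⟩ := hgx
  obtain ⟨h', hh'R, hyh⟩ := hgy
  have hm₀h : m₀ = g₁ * h := by
    apply mul_left_cancel₀ hm₀
    rw [show m₀ * (g₁ * h) = m₀ * g₁ * h by ring, ← hgg₁, ← hxh]
  have hlm₀h : l * m₀ = g₁ * h' := by
    apply mul_left_cancel₀ hm₀
    rw [show m₀ * (g₁ * h') = m₀ * g₁ * h' by ring, ← hgg₁, ← hyh]
    ring
  have hh0 : h ≠ 0 := by rintro rfl; rw [mul_zero] at hm₀h; exact hm₀ hm₀h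
  have hh'l : h' = l * h := by
    apply mul_left_cancel₀ hg₁0
    rw [← hlm₀h, hm₀h]; ring
  have hπh : piF hLM h = 0 := by
    by_contra hne
    have hπhK : piF hLM h ∈ K := (mem_ringR_iff hKL hLM).mp hhR
    obtain ⟨w, hwK, hw⟩ := hfield _ hπhK hne
    have hπh' : piF hLM h' = l * piF hLM h := by
      rw [hh'l, piF_mul, piF_of_memL hLM hlL]
    have hπh'K : piF hLM h' ∈ K := (mem_ringR_iff hKL hLM).mp hh'R
    have hlval : l = piF hLM h' * w := by
      rw [hπh']
      calc l = l * (piF hLM h * w) := by rw [hw, mul_one]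
        _ = l * piF hLM h * w := by ring
    apply hlK
    rw [hlval]
    exact K.mul_mem hπh'K hwK
  have hhM : h ∈ M := (piF_memM_iff hLM).mpr hπh
  have hh'M : h' ∈ M := by
    rw [piF_memM_iff hLM, hh'l, piF_mul, hπh, mul_zero]
  -- Step 4
  have habs : ∀ lam, lam ∈ L → lam ≠ 0 → lam ∈ K := by
    intro lam hlam hlam0
    obtain ⟨lam', hlam'L, hh_inv⟩ := hL lam hlam hlam0
    have hlam'0 : lam' ≠ 0 := by
      rintro rfl; rw [mul_zero] at hh_inv; exact one_ne_zero hh_inv.symm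
    obtain ⟨w, hwR, hw⟩ : DvdIn (ringR K M) (lam' * g) g := by
      refine hgbig (lam' * g) ?_ ?_ ?_
      · -- lam' * g ∈ ringR : g ∈ M since g = m₀ g₁
        exact memM_ringR (M.mul_mem_left lam' (hgg₁ ▸ M.mul_mem_right g₁ hm₀M))
      · refine ⟨lam * h, memM_ringR (M.mul_mem_left lam hhM), ?_⟩
        rw [hxh]
        linear_combination (-(g * h)) * hh_inv
      · refine ⟨lam * h', memM_ringR (M.mul_mem_left lam hh'M), ?_⟩
        rw [hyh]
        linear_combination (-(g * h')) * hh_inv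
    -- g = lam' * g * w ⇒ 1 = lam' * w ⇒ w = lam
    have h2 : (1 : T) = lam' * w :=
      mul_left_cancel₀ hg0 (by linear_combination hw)
    have h3 : lam = w := by
      have e1 : lam * 1 = lam * (lam' * w) := by rw [← h2]
      have e2 : lam * (lam' * w) = (lam * lam') * w := by ring
      rw [e2, hh_inv, one_mul, mul_one] at e1
      exact e1
    have hπw : piF hLM w ∈ K := (mem_ringR_iff hKL hLM).mp hwR
    have hwL : w ∈ L := h3 ▸ hlam
    rw [h3, ← piF_of_memL hLM hwL]
    exact hπw
  exact hlK (habs l hlL hl0)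

lemma gcdK_of (hLM : DirectSumDecomp L M) (hKL : K ≤ L)
    (hR : IsGCDDomain ↥(ringR K M)) : IsGCDDomain ↥K := by
  intro a b ha hb
  have haT : (a : T) ≠ 0 := fun h => ha (Subtype.ext h)
  have hbT : (b : T) ≠ 0 := fun h => hb (Subtype.ext h)
  obtain ⟨g, hgR, ⟨wa, hwaR, hwa⟩, ⟨wb, hwbR, hwb⟩, hbig⟩ :=
    hR_gcd hR (K_le_ringR K M a.2) (K_le_ringR K M b.2) haT hbT
  have hpK : piF hLM g ∈ K := (mem_ringR_iff hKL hLM).mp hgR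
  have hπa : piF hLM (a : T) = (a : T) := piF_of_memL hLM (hKL a.2)
  have hπb : piF hLM (b : T) = (b : T) := piF_of_memL hLM (hKL b.2)
  refine ⟨⟨piF hLM g, hpK⟩, ?_, ?_, ?_⟩
  · rw [subring_dvd_iff]
    exact ⟨piF hLM wa, (mem_ringR_iff hKL hLM).mp hwaR, by
      rw [← hπa, hwa, piF_mul]⟩
  · rw [subring_dvd_iff]
    exact ⟨piF hLM wb, (mem_ringR_iff hKL hLM).mp hwbR, by
      rw [← hπb, hwb, piF_mul]⟩
  · intro c hca hcb
    rw [subring_dvd_iff] at hca hcb ⊢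
    obtain ⟨ka, hkaK, hka⟩ := hca
    obtain ⟨kb, hkbK, hkb⟩ := hcb
    have hcR : (c : T) ∈ ringR K M := K_le_ringR K M c.2
    obtain ⟨w, hwR, hgw⟩ :=
      hbig (c : T) hcR ⟨ka, K_le_ringR K M hkaK, hka⟩ ⟨kb, K_le_ringR K M hkbK, hkb⟩
    refine ⟨piF hLM w, (mem_ringR_iff hKL hLM).mp hwR, ?_⟩
    show piF hLM g = (c : T) * piF hLM w
    rw [hgw, piF_mul, piF_of_memL hLM (hKL c.2)]

lemma frac_of (hL : IsFieldSub L) (hM0 : M ≠ ⊥) (hLM : DirectSumDecomp L M)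
    (hKL : K ≤ L) (hKne : K ≠ L) (hR : IsGCDDomain ↥(ringR K M)) : IsFracOf K L := by
  obtain ⟨k₀, hk₀K, hk₀0, hk₀⟩ := not_field hL hM0 hLM hKL hKne hR
  intro l hlL
  by_cases hl0 : l = 0
  · exact ⟨0, K.zero_mem, 1, K.one_mem, one_ne_zero, by rw [hl0, zero_mul]⟩
  obtain ⟨m₀, hm₀M, hm₀⟩ := Submodule.exists_mem_ne_zero_of_ne_bot hM0
  have hyM : l * m₀ ∈ M := M.mul_mem_left l hm₀M
  have hy0 : l * m₀ ≠ 0 := mul_ne_zero hl0 hm₀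
  obtain ⟨g, hgR, ⟨r, hrR, hxr⟩, ⟨r', hr'R, hyr⟩, hbig⟩ :=
    hR_gcd hR (memM_ringR hm₀M) (memM_ringR hyM) hm₀ hy0
  have hg0 : g ≠ 0 := by rintro rfl; rw [zero_mul] at hxr; exact hm₀ hxr
  have hr'lr : r' = l * r := by
    apply mul_left_cancel₀ hg0
    rw [← hyr, hxr]; ring
  have hπr : piF hLM r ≠ 0 := by
    intro h0
    have hrM : r ∈ M := (piF_memM_iff hLM).mpr h0
    have hr'M : r' ∈ M := by
      rw [piF_memM_iff hLM, hr'lr, piF_mul, h0, mul_zero]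
    obtain ⟨k₀', hk₀'L, hk₀k₀'⟩ := hL k₀ (hKL hk₀K) hk₀0
    obtain ⟨w, hwR, hgw⟩ : DvdIn (ringR K M) (k₀ * g) g := by
      refine hbig (k₀ * g) ((ringR K M).mul_mem (K_le_ringR K M hk₀K) hgR) ?_ ?_
      · refine ⟨k₀' * r, memM_ringR (M.mul_mem_left k₀' hrM), ?_⟩
        rw [hxr]
        linear_combination (-(g * r)) * hk₀k₀'
      · refine ⟨k₀' * r', memM_ringR (M.mul_mem_left k₀' hr'M), ?_⟩
        rw [hyr]
        linear_combination (-(g * r')) * hk₀k₀'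
    have h2 : (1 : T) = k₀ * w :=
      mul_left_cancel₀ hg0 (by linear_combination hgw)
    have h3 : k₀ * piF hLM w = 1 := by
      rw [← piF_one hLM, h2, piF_mul, piF_of_memL hLM (hKL hk₀K)]
    exact hk₀ (piF hLM w) ((mem_ringR_iff hKL hLM).mp hwR) h3
  refine ⟨piF hLM r', (mem_ringR_iff hKL hLM).mp hr'R,
    piF hLM r, (mem_ringR_iff hKL hLM).mp hrR, hπr, ?_⟩
  rw [hr'lr, piF_mul, piF_of_memL hLM hlL]


lemma k0g_dvd (hL : IsFieldSub L) {k₀ g x r : T} (hk₀L : k₀ ∈ L) (hk₀0 : k₀ ≠ 0)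
    (hrM : r ∈ M) (hx : x = g * r) : DvdIn (ringR K M) (k₀ * g) x := by
  obtain ⟨k₀', hk₀'L, hk₀k₀'⟩ := hL k₀ hk₀L hk₀0
  refine ⟨k₀' * r, memM_ringR (M.mul_mem_left k₀' hrM), ?_⟩
  rw [hx]
  linear_combination (-(g * r)) * hk₀k₀'

lemma k0_not_unit (hLM : DirectSumDecomp L M) (hKL : K ≤ L) {k₀ g : T}
    (hk₀K : k₀ ∈ K) (hk₀ : ∀ w ∈ K, k₀ * w ≠ 1) (hg0 : g ≠ 0)
    (hdvd : DvdIn (ringR K M) (k₀ * g) g) : False := by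
  obtain ⟨w, hwR, hgw⟩ := hdvd
  have h2 : (1 : T) = k₀ * w := mul_left_cancel₀ hg0 (by linear_combination hgw)
  have h3 : k₀ * piF hLM w = 1 := by
    rw [← piF_one hLM, h2, piF_mul, piF_of_memL hLM (hKL hk₀K)]
  exact hk₀ (piF hLM w) ((mem_ringR_iff hKL hLM).mp hwR) h3

lemma val_of (hL : IsFieldSub L) (hM0 : M ≠ ⊥) (hLM : DirectSumDecomp L M)
    (hKL : K ≤ L) (hKne : K ≠ L) (hp : M.IsPrime)
    (hR : IsGCDDomain ↥(ringR K M)) : ValAtPrime M hp := by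
  haveI := hp
  letI : IsDomain (Localization.AtPrime M) := IsLocalization.isDomain_of_local_atPrime hp
  obtain ⟨k₀, hk₀K, hk₀0, hk₀⟩ := not_field hL hM0 hLM hKL hKne hR
  obtain ⟨m₀, hm₀M, hm₀⟩ := Submodule.exists_mem_ne_zero_of_ne_bot hM0
  set f := algebraMap T (Localization.AtPrime M) with hf
  have hle : M.primeCompl ≤ nonZeroDivisors T := by
    intro x hx
    refine mem_nonZeroDivisors_of_ne_zero (fun h => hx ?_)
    rw [h]; exact M.zero_mem
  have hinj : Function.Injective f := IsLocalization.injective _ hle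
  have hf0 : ∀ t : T, t ≠ 0 → f t ≠ 0 := by
    intro t ht h
    exact ht (hinj (by rw [h, map_zero]))
  have hcomp : ∀ t₁ t₂ : T, t₁ ≠ 0 → t₂ ≠ 0 →
      (∃ c, f t₁ * c = f t₂) ∨ (∃ c, f t₂ * c = f t₁) := by
    intro t₁ t₂ ht₁ ht₂
    have hu : m₀ * t₁ ∈ M := M.mul_mem_right t₁ hm₀M
    have hv : m₀ * t₂ ∈ M := M.mul_mem_right t₂ hm₀M
    obtain ⟨g, hgR, ⟨u', hu'R, hu'⟩, ⟨v', hv'R, hv'⟩, hbig⟩ :=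
      hR_gcd hR (memM_ringR hu) (memM_ringR hv) (mul_ne_zero hm₀ ht₁) (mul_ne_zero hm₀ ht₂)
    have hg0 : g ≠ 0 := by
      rintro rfl; rw [zero_mul] at hu'; exact (mul_ne_zero hm₀ ht₁) hu'
    have hnot : u' ∉ M ∨ v' ∉ M := by
      by_contra hcc
      push_neg at hcc
      refine k0_not_unit hLM hKL hk₀K hk₀ hg0 ?_
      exact hbig (k₀ * g) ((ringR K M).mul_mem (K_le_ringR K M hk₀K) hgR)
        (k0g_dvd hL (hKL hk₀K) hk₀0 hcc.1 hu') (k0g_dvd hL (hKL hk₀K) hk₀0 hcc.2 hv')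
    have key : ∀ (w₁ w₂ z₁ z₂ : T), w₁ ∉ M → m₀ * z₁ = g * w₁ → m₀ * z₂ = g * w₂ →
        ∃ c, f z₁ * c = f z₂ := by
      intro w₁ w₂ z₁ z₂ hw₁ h₁ h₂
      obtain ⟨iu, hiu⟩ := IsLocalization.map_units (Localization.AtPrime M)
        (⟨w₁, hw₁⟩ : M.primeCompl)
      refine ⟨(↑iu⁻¹ : Localization.AtPrime M) * f w₂, ?_⟩
      apply mul_left_cancel₀ (hf0 m₀ hm₀)
      have e1 : f (m₀ * z₁) = f g * f w₁ := by rw [h₁, map_mul]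
      have e2 : f (m₀ * z₂) = f g * f w₂ := by rw [h₂, map_mul]
      calc f m₀ * (f z₁ * (↑iu⁻¹ * f w₂))
          = f (m₀ * z₁) * ↑iu⁻¹ * f w₂ := by rw [map_mul]; ring
        _ = f g * (f w₁ * ↑iu⁻¹) * f w₂ := by rw [e1]; ring
        _ = f g * f w₂ := by rw [← hiu, Units.mul_inv, mul_one]
        _ = f m₀ * f z₂ := by rw [← e2, map_mul]
    rcases hnot with hw | hw
    · exact Or.inl (key u' v' t₁ t₂ hw hu' hv')
    · exact Or.inr (key v' u' t₂ t₁ hw hv' hu')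
  unfold ValAtPrime
  refine @ValuationRing.mk _ _ _ ⟨fun a b => ?_⟩
  by_cases ha : a = 0
  · exact ⟨0, Or.inr (by rw [mul_zero, ha])⟩
  by_cases hb : b = 0
  · exact ⟨0, Or.inl (by rw [mul_zero, hb])⟩
  obtain ⟨⟨t₁, s₁⟩, h₁⟩ := IsLocalization.surj M.primeCompl a
  obtain ⟨⟨t₂, s₂⟩, h₂⟩ := IsLocalization.surj M.primeCompl b
  have hs₁ : IsUnit (f (s₁ : T)) := IsLocalization.map_units _ s₁
  have hs₂ : IsUnit (f (s₂ : T)) := IsLocalization.map_units _ s₂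
  have ht₁ : t₁ ≠ 0 := by
    rintro rfl
    rw [map_zero] at h₁
    exact ha (by
      have := hs₁.mul_left_eq_zero.mp h₁
      exact this)
  have ht₂ : t₂ ≠ 0 := by
    rintro rfl
    rw [map_zero] at h₂
    exact hb (hs₂.mul_left_eq_zero.mp h₂)
  have main : ∀ (z₁ z₂ : T) (σ₁ σ₂ : M.primeCompl) (A B : Localization.AtPrime M),
      A * f σ₁ = f z₁ → B * f σ₂ = f z₂ → (∃ c, f z₁ * c = f z₂) → ∃ c, A * c = B := by
    intro z₁ z₂ σ₁ σ₂ A B e₁ e₂ ⟨c, hc⟩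
    have hσ₂ : IsUnit (f (σ₂ : T)) := IsLocalization.map_units _ σ₂
    obtain ⟨i₂, hi₂⟩ := hσ₂
    refine ⟨f σ₁ * c * ↑i₂⁻¹, ?_⟩
    apply mul_right_cancel₀ (hi₂ ▸ Units.ne_zero i₂)
    calc A * (f σ₁ * c * ↑i₂⁻¹) * f σ₂
        = (A * f σ₁) * c * (↑i₂⁻¹ * f σ₂) := by ring
      _ = f z₁ * c * 1 := by rw [e₁, ← hi₂, Units.inv_mul]
      _ = f z₂ := by rw [mul_one, hc]
      _ = B * f σ₂ := e₂.symm
  rcases hcomp t₁ t₂ ht₁ ht₂ with h | h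
  · exact ⟨_, Or.inl (Classical.choose_spec (main t₁ t₂ s₁ s₂ a b h₁ h₂ h))⟩
  · exact ⟨_, Or.inr (Classical.choose_spec (main t₂ t₁ s₂ s₁ b a h₂ h₁ h))⟩


lemma scale_into (hLM : DirectSumDecomp L M) (hKL : K ≤ L) (hfrac : IsFracOf K L)
    (t : T) : ∃ b, b ∈ K ∧ b ≠ 0 ∧ b * t ∈ ringR K M := by
  obtain ⟨a, haK, b, hbK, hb0, hab⟩ := hfrac (piF hLM t) (piF_memL hLM t)
  refine ⟨b, hbK, hb0, ?_⟩
  rw [mem_ringR_iff hKL hLM, piF_mul, piF_of_memL hLM (hKL hbK)]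
  have h2 : b * piF hLM t = a := by rw [mul_comm]; exact hab
  rw [h2]; exact haK

lemma tGCD_of (hL : IsFieldSub L) (hLM : DirectSumDecomp L M) (hKL : K ≤ L)
    (hfrac : IsFracOf K L) (hR : IsGCDDomain ↥(ringR K M)) : IsGCDDomain T := by
  have unitT : ∀ u : T, u ∈ K → u ≠ 0 → ∃ u', u * u' = 1 := by
    intro u hu h0
    obtain ⟨u', _, h⟩ := hL u (hKL hu) h0
    exact ⟨u', h⟩
  intro t₁ t₂ ht₁ ht₂
  obtain ⟨b₁, hb₁K, hb₁0, hb₁R⟩ := scale_into hLM hKL hfrac t₁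
  obtain ⟨b₂, hb₂K, hb₂0, hb₂R⟩ := scale_into hLM hKL hfrac t₂
  set B := b₁ * b₂ with hBdef
  have hBK : B ∈ K := K.mul_mem hb₁K hb₂K
  have hB0 : B ≠ 0 := mul_ne_zero hb₁0 hb₂0
  obtain ⟨iB, hBi⟩ := unitT B hBK hB0
  have hxR : B * t₁ ∈ ringR K M := by
    have h : B * t₁ = b₂ * (b₁ * t₁) := by rw [hBdef]; ring
    rw [h]; exact (ringR K M).mul_mem (K_le_ringR K M hb₂K) hb₁R
  have hyR : B * t₂ ∈ ringR K M := by
    have h : B * t₂ = b₁ * (b₂ * t₂) := by rw [hBdef]; ring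
    rw [h]; exact (ringR K M).mul_mem (K_le_ringR K M hb₁K) hb₂R
  have hx0 : B * t₁ ≠ 0 := mul_ne_zero hB0 ht₁
  have hy0 : B * t₂ ≠ 0 := mul_ne_zero hB0 ht₂
  obtain ⟨g, hgR, ⟨w₁, hw₁R, hw₁⟩, ⟨w₂, hw₂R, hw₂⟩, hbig⟩ := hR_gcd hR hxR hyR hx0 hy0
  refine ⟨g, ⟨w₁ * iB, by linear_combination iB * hw₁ - t₁ * hBi⟩,
    ⟨w₂ * iB, by linear_combination iB * hw₂ - t₂ * hBi⟩, ?_⟩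
  intro c hc1 hc2
  obtain ⟨e₁, he₁⟩ := hc1
  obtain ⟨e₂, he₂⟩ := hc2
  have hc0 : c ≠ 0 := by rintro rfl; rw [zero_mul] at he₁; exact ht₁ he₁
  obtain ⟨β, hβK, hβ0, hβR⟩ := scale_into hLM hKL hfrac c
  obtain ⟨iβ, hβi⟩ := unitT β hβK hβ0
  set q₁ := iβ * B * e₁ with hq₁def
  set q₂ := iβ * B * e₂ with hq₂def
  have hq₁ : β * c * q₁ = B * t₁ := by
    rw [hq₁def, he₁]; linear_combination (B * c * e₁) * hβi
  have hq₂ : β * c * q₂ = B * t₂ := by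
    rw [hq₂def, he₂]; linear_combination (B * c * e₂) * hβi
  obtain ⟨γ₁, hγ₁K, hγ₁0, hγ₁R⟩ := scale_into hLM hKL hfrac q₁
  obtain ⟨γ₂, hγ₂K, hγ₂0, hγ₂R⟩ := scale_into hLM hKL hfrac q₂
  set γ := γ₁ * γ₂ with hγdef
  have hγK : γ ∈ K := K.mul_mem hγ₁K hγ₂K
  have hγ0 : γ ≠ 0 := mul_ne_zero hγ₁0 hγ₂0
  obtain ⟨iγ, hγi⟩ := unitT γ hγK hγ0
  have hγq₁R : γ * q₁ ∈ ringR K M := by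
    have h : γ * q₁ = γ₂ * (γ₁ * q₁) := by rw [hγdef]; ring
    rw [h]; exact (ringR K M).mul_mem (K_le_ringR K M hγ₂K) hγ₁R
  have hγq₂R : γ * q₂ ∈ ringR K M := by
    have h : γ * q₂ = γ₁ * (γ₂ * q₂) := by rw [hγdef]; ring
    rw [h]; exact (ringR K M).mul_mem (K_le_ringR K M hγ₁K) hγ₂R
  -- subtype elements
  set R := ringR K M
  have hβcR : β * c ∈ R := hβR
  have hγR : γ ∈ R := K_le_ringR K M hγK
  have hXne : (⟨B * t₁, hxR⟩ : ↥R) ≠ 0 := fun h => hx0 (congrArg Subtype.val h)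
  have hYne : (⟨B * t₂, hyR⟩ : ↥R) ≠ 0 := fun h => hy0 (congrArg Subtype.val h)
  have hkne : (⟨γ, hγR⟩ : ↥R) ≠ 0 := fun h => hγ0 (congrArg Subtype.val h)
  have hgsub : ∀ c' : ↥R, c' ∣ ⟨B * t₁, hxR⟩ → c' ∣ ⟨B * t₂, hyR⟩ → c' ∣ ⟨g, hgR⟩ := by
    intro c' h1 h2
    exact (subring_dvd_iff _ _).mpr
      (hbig (c' : T) c'.2 ((subring_dvd_iff _ _).mp h1) ((subring_dvd_iff _ _).mp h2))
  have hres : (⟨β * c, hβcR⟩ : ↥R) ∣ ⟨γ, hγR⟩ * ⟨g, hgR⟩ := by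
    refine gcd_scale hR hXne hYne hkne hgsub _ ?_ ?_
    · refine (subring_dvd_iff _ _).mpr ⟨γ * q₁, hγq₁R, ?_⟩
      show γ * (B * t₁) = β * c * (γ * q₁)
      linear_combination γ * hq₁.symm
    · refine (subring_dvd_iff _ _).mpr ⟨γ * q₂, hγq₂R, ?_⟩
      show γ * (B * t₂) = β * c * (γ * q₂)
      linear_combination γ * hq₂.symm
  obtain ⟨w, hwR, hww⟩ := (subring_dvd_iff _ _).mp hres
  have hww' : γ * g = β * c * w := hww
  exact ⟨β * iγ * w, by linear_combination iγ * hww' - g * hγi⟩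


lemma coprime_not_both (hT : IsGCDDomain T) (hp : M.IsPrime) (hval : ValAtPrime M hp)
    {s t : T} (hs : s ≠ 0) (ht : t ≠ 0)
    (hcop : ∀ c, c ∣ s → c ∣ t → IsUnit c) : s ∉ M ∨ t ∉ M := by
  haveI := hp
  letI dom : IsDomain (Localization.AtPrime M) := IsLocalization.isDomain_of_local_atPrime hp
  set f := algebraMap T (Localization.AtPrime M) with hf
  have hle : M.primeCompl ≤ nonZeroDivisors T := by
    intro x hx
    refine mem_nonZeroDivisors_of_ne_zero (fun h => hx ?_)
    rw [h]; exact M.zero_mem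
  have hinj : Function.Injective f := IsLocalization.injective _ hle
  have key : ∀ s' t' : T, s' ≠ 0 → t' ≠ 0 →
      (∀ c, c ∣ s' → c ∣ t' → IsUnit c) → ∀ c : Localization.AtPrime M,
      f s' * c = f t' → s' ∉ M := by
    intro s' t' hs' ht' hcop' c hc
    obtain ⟨⟨u, v⟩, hcv⟩ := IsLocalization.surj M.primeCompl c
    have heq : f (s' * u) = f (t' * (v : T)) := by
      rw [map_mul, map_mul]
      calc f s' * f u = f s' * (c * f (v : T)) := by rw [hcv]
        _ = (f s' * c) * f (v : T) := by ring
        _ = f t' * f (v : T) := by rw [hc]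
    have hst : s' * u = t' * (v : T) := hinj heq
    have hv0 : (v : T) ≠ 0 := fun h => v.2 (by rw [h]; exact M.zero_mem)
    have hu0 : u ≠ 0 := by
      rintro rfl
      rw [mul_zero] at hst
      rcases mul_eq_zero.mp hst.symm with h | h
      · exact ht' h
      · exact hv0 h
    have htu : t' ∣ u := euclid hT hs' ht' hu0 hcop' ⟨(v : T), hst⟩
    obtain ⟨u₁, hu₁⟩ := htu
    have hveq : (v : T) = s' * u₁ := by
      apply mul_left_cancel₀ ht'
      rw [← hst, hu₁]; ring
    intro hsM
    exact v.2 (hveq ▸ M.mul_mem_right u₁ hsM)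
  have hcond := @ValuationRing.cond _ _ (@ValuationRing.toPreValuationRing _ _ dom hval) (f s) (f t)
  obtain ⟨c, hc | hc⟩ := hcond
  · exact Or.inl (key s t hs ht hcop c hc)
  · exact Or.inr (key t s ht hs (fun c h1 h2 => hcop c h2 h1) c hc)


lemma main' (hL : IsFieldSub L) (hLM : DirectSumDecomp L M) (hKL : K ≤ L)
    (hK : IsGCDDomain ↥K) (hfrac : IsFracOf K L)
    {x y d s t : T} (hx : x ∈ ringR K M) (hy : y ∈ ringR K M)
    (hx0 : x ≠ 0) (hy0 : y ≠ 0)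
    (hdx : x = d * s) (hdy : y = d * t)
    (hdg : ∀ c : T, c ∣ x → c ∣ y → c ∣ d)
    (hπs : piF hLM s ≠ 0) :
    ∃ g ∈ ringR K M, DvdIn (ringR K M) g x ∧ DvdIn (ringR K M) g y ∧
      ∀ c ∈ ringR K M, DvdIn (ringR K M) c x → DvdIn (ringR K M) c y →
        DvdIn (ringR K M) c g := by
  have hd0 : d ≠ 0 := by rintro rfl; rw [zero_mul] at hdx; exact hx0 hdx
  have hs0 : s ≠ 0 := by rintro rfl; rw [mul_zero] at hdx; exact hx0 hdx
  have ht0 : t ≠ 0 := by rintro rfl; rw [mul_zero] at hdy; exact hy0 hdy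
  set ps := piF hLM s with hpsdef
  obtain ⟨ps', hps'L, hss'⟩ := hL ps (piF_memL hLM s) hπs
  -- construct coprime pair (A, Bk) in K with  piF t * Bk = A * ps
  obtain ⟨A, Bk, hb0, hrel, hbdvd⟩ : ∃ A Bk : ↥K, (Bk : T) ≠ 0 ∧
      piF hLM t * (Bk : T) = (A : T) * ps ∧ ∀ p : ↥K, Bk ∣ A * p → Bk ∣ p := by
    by_cases hπt : piF hLM t = 0
    · refine ⟨0, 1, one_ne_zero, by rw [hπt]; simp, fun p _ => one_dvd p⟩
    · have hps'0 : ps' ≠ 0 := by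
        rintro rfl; rw [mul_zero] at hss'; exact one_ne_zero hss'.symm
      obtain ⟨a₀, ha₀K, b₀, hb₀K, hb₀0, hab₀⟩ :=
        hfrac (piF hLM t * ps') (L.mul_mem (piF_memL hLM t) hps'L)
      have ha₀0 : a₀ ≠ 0 := by
        rintro rfl
        rcases mul_eq_zero.mp hab₀ with h | h
        · rcases mul_eq_zero.mp h with h' | h'
          · exact hπt h'
          · exact hps'0 h'
        · exact hb₀0 h
      obtain ⟨G, hGa, hGb, hGbig⟩ := hK ⟨a₀, ha₀K⟩ ⟨b₀, hb₀K⟩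
        (fun h => ha₀0 (congrArg Subtype.val h)) (fun h => hb₀0 (congrArg Subtype.val h))
      obtain ⟨A, hA⟩ := hGa
      obtain ⟨Bk, hB⟩ := hGb
      have heA : a₀ = (G : T) * (A : T) := congrArg Subtype.val hA
      have heB : b₀ = (G : T) * (Bk : T) := congrArg Subtype.val hB
      have hG0 : (G : T) ≠ 0 := by
        intro h
        apply ha₀0
        rw [heA, h, zero_mul]
      have hBk0 : (Bk : T) ≠ 0 := by
        intro h
        apply hb₀0
        rw [heB, h, mul_zero]
      refine ⟨A, Bk, hBk0, ?_, ?_⟩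
      · -- piF t * Bk = A * ps
        apply mul_left_cancel₀ hG0
        have e1 : piF hLM t * ps' * b₀ = a₀ := hab₀
        -- goal : G * (piF t * Bk) = G * (A * ps)
        have e4 : piF hLM t * ps' * ((G : T) * (Bk : T)) = (G : T) * (A : T) := by
          rw [← heB, ← heA]; exact e1
        linear_combination ps * e4 + (-((G : T) * piF hLM t * (Bk : T))) * hss'
      · -- Euclid property
        intro p hBAp
        by_cases hp0 : p = 0
        · rw [hp0]; exact dvd_zero Bk
        · have hcop : ∀ c : ↥K, c ∣ A → c ∣ Bk → IsUnit c := by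
            intro c hcA hcB
            have h1 : G * c ∣ ⟨a₀, ha₀K⟩ := by
              rw [hA]; exact mul_dvd_mul_left G hcA
            have h2 : G * c ∣ ⟨b₀, hb₀K⟩ := by
              rw [hB]; exact mul_dvd_mul_left G hcB
            obtain ⟨w, hw⟩ := hGbig (G * c) h1 h2
            have hG0' : G ≠ 0 := fun h => hG0 (congrArg Subtype.val h)
            have : (1 : ↥K) = c * w := by
              apply mul_left_cancel₀ hG0'
              rw [mul_one]
              linear_combination hw
            exact IsUnit.of_mul_eq_one (a := c) w this.symm
          have hA0 : A ≠ 0 := by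
            intro h
            apply ha₀0
            rw [heA, h]
            show (G : T) * ((0 : ↥K) : T) = 0
            rw [ZeroMemClass.coe_zero, mul_zero]
          exact euclid hK hA0 (fun h => hBk0 (congrArg Subtype.val h)) hp0 hcop hBAp
  obtain ⟨ib, hibL, hib⟩ := hL (Bk : T) (hKL Bk.2) hb0
  by_cases hπd : piF hLM d = 0
  -- CASE 1 : d ∈ M
  · have hdM : d ∈ M := (piF_memM_iff hLM).mpr hπd
    set g := d * ps * ib with hgdef
    have hgM : g ∈ M := M.mul_mem_right ib (M.mul_mem_right ps hdM)
    refine ⟨g, memM_ringR hgM, ?_, ?_, ?_⟩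
    · refine ⟨s * ps' * (Bk : T), ?_, ?_⟩
      · rw [mem_ringR_iff hKL hLM, piF_mul, piF_mul, piF_of_memL hLM hps'L,
          piF_of_memL hLM (hKL Bk.2)]
        have : ps * ps' * (Bk : T) = (Bk : T) := by linear_combination (Bk : T) * hss'
        rw [← hpsdef, this]
        exact Bk.2
      · rw [hdx, hgdef]
        linear_combination (-(d * s * (Bk : T) * ib)) * hss' + (-(d * s)) * hib
    · refine ⟨t * ps' * (Bk : T), ?_, ?_⟩
      · rw [mem_ringR_iff hKL hLM, piF_mul, piF_mul, piF_of_memL hLM hps'L,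
          piF_of_memL hLM (hKL Bk.2)]
        have : piF hLM t * ps' * (Bk : T) = (A : T) := by
          linear_combination ps' * hrel + (A : T) * hss'
        rw [this]
        exact A.2
      · rw [hdy, hgdef]
        linear_combination (-(d * t * (Bk : T) * ib)) * hss' + (-(d * t)) * hib
    · intro c hcR hcx hcy
      obtain ⟨wx, hwxR, hwx⟩ := hcx
      obtain ⟨wy, hwyR, hwy⟩ := hcy
      have hc0 : c ≠ 0 := by rintro rfl; rw [zero_mul] at hwx; exact hx0 hwx
      obtain ⟨e, hde⟩ := hdg c ⟨wx, hwx⟩ ⟨wy, hwy⟩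
      have hwxe : wx = e * s := by
        apply mul_left_cancel₀ hc0
        rw [← hwx, hdx, hde]; ring
      have hwye : wy = e * t := by
        apply mul_left_cancel₀ hc0
        rw [← hwy, hdy, hde]; ring
      have hpK : piF hLM e * ps ∈ K := by
        have h1 : piF hLM wx ∈ K := (mem_ringR_iff hKL hLM).mp hwxR
        rw [hwxe, piF_mul, ← hpsdef] at h1
        exact h1
      have hqK : piF hLM e * piF hLM t ∈ K := by
        have h1 : piF hLM wy ∈ K := (mem_ringR_iff hKL hLM).mp hwyR
        rw [hwye, piF_mul] at h1
        exact h1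
      -- Bk ∣ p in K
      obtain ⟨κ, hκ⟩ : Bk ∣ (⟨piF hLM e * ps, hpK⟩ : ↥K) := by
        apply hbdvd
        refine ⟨⟨piF hLM e * piF hLM t, hqK⟩, ?_⟩
        apply Subtype.ext
        show (A : T) * (piF hLM e * ps) = (Bk : T) * (piF hLM e * piF hLM t)
        linear_combination (-(piF hLM e)) * hrel
      have hκval : piF hLM e * ps = (Bk : T) * (κ : T) := congrArg Subtype.val hκ
      refine ⟨e * ps * ib, ?_, ?_⟩
      · rw [mem_ringR_iff hKL hLM, piF_mul, piF_mul, piF_of_memL hLM hibL]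
        have hpp : piF hLM ps = ps := by
          rw [hpsdef]; exact piF_of_memL hLM (piF_memL hLM s)
        rw [hpp]
        have : piF hLM e * ps * ib = (κ : T) := by
          linear_combination ib * hκval + (κ : T) * hib
        rw [this]
        exact κ.2
      · rw [hgdef, hde]; ring
  -- CASE 2 : piF d ≠ 0
  · set pd := piF hLM d with hpddef
    obtain ⟨pd', hpd'L, hdd'⟩ := hL pd (piF_memL hLM d) hπd
    have hπx : piF hLM x = pd * ps := by rw [hdx, piF_mul]
    have hπy : piF hLM y = pd * piF hLM t := by rw [hdy, piF_mul]
    have hπxK : piF hLM x ∈ K := (mem_ringR_iff hKL hLM).mp hx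
    have hπyK : piF hLM y ∈ K := (mem_ringR_iff hKL hLM).mp hy
    have hπx0 : piF hLM x ≠ 0 := by
      rw [hπx]; exact mul_ne_zero hπd hπs
    -- gcd E of (piF x, piF y) in K
    obtain ⟨E, hEK, hE0, hEx, hEy, hEbig⟩ : ∃ E, E ∈ K ∧ E ≠ 0 ∧
        (∃ κ ∈ K, piF hLM x = E * κ) ∧ (∃ κ ∈ K, piF hLM y = E * κ) ∧
        ∀ c' ∈ K, (∃ κ ∈ K, piF hLM x = c' * κ) → (∃ κ ∈ K, piF hLM y = c' * κ) →
          (∃ κ ∈ K, E = c' * κ) := by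
      by_cases hπy0 : piF hLM y = 0
      · refine ⟨piF hLM x, hπxK, hπx0, ⟨1, K.one_mem, (mul_one _).symm⟩,
          ⟨0, K.zero_mem, by rw [hπy0, mul_zero]⟩, ?_⟩
        intro c' hc'K h1 _
        exact h1
      · obtain ⟨G, hG1, hG2, hG3⟩ := hK ⟨piF hLM x, hπxK⟩ ⟨piF hLM y, hπyK⟩
          (fun h => hπx0 (congrArg Subtype.val h)) (fun h => hπy0 (congrArg Subtype.val h))
        obtain ⟨w1, hw1⟩ := hG1
        obtain ⟨w2, hw2⟩ := hG2
        refine ⟨(G : T), G.2, ?_, ⟨(w1 : T), w1.2, congrArg Subtype.val hw1⟩,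
          ⟨(w2 : T), w2.2, congrArg Subtype.val hw2⟩, ?_⟩
        · intro h
          apply hπx0
          have e5 : piF hLM x = (G : T) * (w1 : T) := congrArg Subtype.val hw1
          rw [e5, h, zero_mul]
        · intro c' hc'K h1 h2
          obtain ⟨κ1, hκ1K, hκ1⟩ := h1
          obtain ⟨κ2, hκ2K, hκ2⟩ := h2
          obtain ⟨w, hw⟩ := hG3 ⟨c', hc'K⟩ ⟨⟨κ1, hκ1K⟩, Subtype.ext hκ1⟩
            ⟨⟨κ2, hκ2K⟩, Subtype.ext hκ2⟩
          exact ⟨(w : T), w.2, congrArg Subtype.val hw⟩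
    obtain ⟨iE, hiEL, hiE⟩ := hL E (hKL hEK) hE0
    set g := d * pd' * E with hgdef
    have hgR : g ∈ ringR K M := by
      rw [mem_ringR_iff hKL hLM, hgdef, piF_mul, piF_mul, piF_of_memL hLM hpd'L,
        piF_of_memL hLM (hKL hEK)]
      have : piF hLM d * pd' * E = E := by
        linear_combination E * hdd'
      rw [← hpddef] at this ⊢
      rw [this]
      exact hEK
    obtain ⟨κx, hκxK, hκx⟩ := hEx
    obtain ⟨κy, hκyK, hκy⟩ := hEy
    refine ⟨g, hgR, ?_, ?_, ?_⟩
    · refine ⟨iE * pd * s, ?_, ?_⟩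
      · rw [mem_ringR_iff hKL hLM, piF_mul, piF_mul, piF_of_memL hLM hiEL,
          piF_of_memL hLM (piF_memL hLM d)]
        have : iE * piF hLM d * piF hLM s = κx := by
          rw [← hpddef, ← hpsdef]
          have h2 : iE * (pd * ps) = iE * (E * κx) := by rw [← hπx, hκx]
          linear_combination h2 + κx * hiE
        rw [this]
        exact hκxK
      · rw [hdx, hgdef]
        linear_combination (-(d * s)) * hiE + (-(d * s * E * iE)) * hdd'
    · refine ⟨iE * pd * t, ?_, ?_⟩
      · rw [mem_ringR_iff hKL hLM, piF_mul, piF_mul, piF_of_memL hLM hiEL,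
          piF_of_memL hLM (piF_memL hLM d)]
        have : iE * piF hLM d * piF hLM t = κy := by
          rw [← hpddef]
          have h2 : iE * (pd * piF hLM t) = iE * (E * κy) := by rw [← hπy, hκy]
          linear_combination h2 + κy * hiE
        rw [this]
        exact hκyK
      · rw [hdy, hgdef]
        linear_combination (-(d * t)) * hiE + (-(d * t * E * iE)) * hdd'
    · intro c hcR hcx hcy
      obtain ⟨wx, hwxR, hwx⟩ := hcx
      obtain ⟨wy, hwyR, hwy⟩ := hcy
      have hc0 : c ≠ 0 := by rintro rfl; rw [zero_mul] at hwx; exact hx0 hwx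
      obtain ⟨e, hde⟩ := hdg c ⟨wx, hwx⟩ ⟨wy, hwy⟩
      have hπc0 : piF hLM c ≠ 0 := by
        intro h
        apply hπx0
        rw [hwx, piF_mul, h, zero_mul]
      have hπcK : piF hLM c ∈ K := (mem_ringR_iff hKL hLM).mp hcR
      obtain ⟨κE, hκEK, hκE⟩ := hEbig (piF hLM c) hπcK
        ⟨piF hLM wx, (mem_ringR_iff hKL hLM).mp hwxR, by rw [hwx, piF_mul]⟩
        ⟨piF hLM wy, (mem_ringR_iff hKL hLM).mp hwyR, by rw [hwy, piF_mul]⟩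
      have hπde : pd = piF hLM c * piF hLM e := by rw [hpddef, hde, piF_mul]
      refine ⟨e * pd' * E, ?_, ?_⟩
      · rw [mem_ringR_iff hKL hLM, piF_mul, piF_mul, piF_of_memL hLM hpd'L,
          piF_of_memL hLM (hKL hEK)]
        have : piF hLM e * pd' * E = κE := by
          linear_combination (piF hLM e * pd') * hκE + (-(κE * pd')) * hπde + κE * hdd'
        rw [this]
        exact hκEK
      · rw [hgdef, hde]; ring


end Main

theorem stmt_18 {T : Type*} [CommRing T] [IsDomain T]
    (L : Subring T) (M : Ideal T) (K : Subring T)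
    (hL : IsFieldSub L) (hM : M.IsMaximal) (hM0 : M ≠ ⊥)
    (hLM : DirectSumDecomp L M) (hKL : K ≤ L) (hKne : K ≠ L) :
    IsGCDDomain ↥(ringR K M) ↔
      (IsGCDDomain T ∧ IsFracOf K L ∧ IsGCDDomain ↥K ∧ ValAtPrime M hM.isPrime) := by
  constructor
  · intro hR
    exact ⟨tGCD_of hL hLM hKL (frac_of hL hM0 hLM hKL hKne hR) hR,
           frac_of hL hM0 hLM hKL hKne hR,
           gcdK_of hLM hKL hR,
           val_of hL hM0 hLM hKL hKne hM.isPrime hR⟩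
  · rintro ⟨hT, hfrac, hK, hval⟩
    intro a b ha hb
    have hx0 : (a : T) ≠ 0 := fun h => ha (Subtype.ext h)
    have hy0 : (b : T) ≠ 0 := fun h => hb (Subtype.ext h)
    obtain ⟨d, ⟨s, hdx⟩, ⟨t, hdy⟩, hdg⟩ := hT (a : T) (b : T) hx0 hy0
    have hd0 : d ≠ 0 := by
      rintro rfl; rw [zero_mul] at hdx; exact hx0 hdx
    have hs0 : s ≠ 0 := by
      rintro rfl; rw [mul_zero] at hdx; exact hx0 hdx
    have ht0 : t ≠ 0 := by
      rintro rfl; rw [mul_zero] at hdy; exact hy0 hdy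
    have hcop : ∀ c, c ∣ s → c ∣ t → IsUnit c := by
      intro c h1 h2
      obtain ⟨u, hu⟩ := h1
      obtain ⟨v, hv⟩ := h2
      obtain ⟨w, hw⟩ := hdg (d * c) ⟨u, by rw [hdx, hu]; ring⟩ ⟨v, by rw [hdy, hv]; ring⟩
      have h1' : (1 : T) = c * w := mul_left_cancel₀ hd0 (by linear_combination hw)
      exact IsUnit.of_mul_eq_one (a := c) w h1'.symm
    have hnb := coprime_not_both hT hM.isPrime hval hs0 ht0 hcop
    obtain ⟨g, hgR, hg1, hg2, hg3⟩ : ∃ g ∈ ringR K M,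
        DvdIn (ringR K M) g (a : T) ∧ DvdIn (ringR K M) g (b : T) ∧
        ∀ c ∈ ringR K M, DvdIn (ringR K M) c (a : T) → DvdIn (ringR K M) c (b : T) →
          DvdIn (ringR K M) c g := by
      rcases hnb with h | h
      · exact main' hL hLM hKL hK hfrac a.2 b.2 hx0 hy0 hdx hdy hdg
          (fun h0 => h ((piF_memM_iff hLM).mpr h0))
      · obtain ⟨g, hgR, h2', h1', h3'⟩ := main' hL hLM hKL hK hfrac b.2 a.2 hy0 hx0 hdy hdx
          (fun c hcy hcx => hdg c hcx hcy) (fun h0 => h ((piF_memM_iff hLM).mpr h0))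
        exact ⟨g, hgR, h1', h2', fun c hc hcx hcy => h3' c hc hcy hcx⟩
    exact ⟨⟨g, hgR⟩, (subring_dvd_iff _ _).mpr hg1, (subring_dvd_iff _ _).mpr hg2,
      fun c h1 h2 => (subring_dvd_iff _ _).mpr
        (hg3 (c : T) c.2 ((subring_dvd_iff _ _).mp h1) ((subring_dvd_iff _ _).mp h2))⟩
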